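/- Let w ∈ ℝ^n with all w_i ≠ 0, b ∈ ℝ, L < U ∈ ℝ^n, and suppose ℓ([n]) < 0 ≤ ℓ(∅). Fix x ∈ [L,U]. Consider the linear program: minimize Σ_i w_i (x_i − L̆_i) v_i over v ∈ [0,1]^n subject to Σ_i w_i (Ŭ_i − L̆_i) v_i = Σ_i w_i Ŭ_i + b. Then this LP is feasible, and its optimal value equals the minimum over pairs (I,h) with ℓ(I) ≥ 0 and ℓ(I∪{h}) < 0 of Σ_{i∈I} w_i(x_i − L̆_i) + (ℓ(I)/(Ŭ_h − L̆_h))(x_h − L̆_h). -/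

import Mathlib

/-- the separation LP is feasible and its optimal value equals the minimum
over pairs `(I,h)` with `ℓ(I) ≥ 0 > ℓ(I∪{h})` of the corresponding inequality value. -/
theorem stmt13 (n : ℕ) (w L U : Fin n → ℝ) (b : ℝ)
    (hw : ∀ i, w i ≠ 0) (hLU : ∀ i, L i < U i)
    (Lb Ub : Fin n → ℝ)
    (hLb : ∀ i, Lb i = if 0 ≤ w i then L i else U i)
    (hUb : ∀ i, Ub i = if 0 ≤ w i then U i else L i)
    (ell : Finset (Fin n) → ℝ)
    (hell : ∀ I, ell I = ∑ i ∈ I, w i * Lb i + ∑ i ∈ Iᶜ, w i * Ub i + b)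
    (huniv : ell Finset.univ < 0) (hempty : 0 ≤ ell ∅)
    (x : Fin n → ℝ) (hx : ∀ i, L i ≤ x i ∧ x i ≤ U i) :
    (∃ v : Fin n → ℝ, (∀ i, 0 ≤ v i ∧ v i ≤ 1) ∧
        ∑ i, w i * (Ub i - Lb i) * v i = ∑ i, w i * Ub i + b) ∧
    ∃ μ : ℝ,
      IsLeast {c : ℝ | ∃ v : Fin n → ℝ, (∀ i, 0 ≤ v i ∧ v i ≤ 1) ∧
          (∑ i, w i * (Ub i - Lb i) * v i = ∑ i, w i * Ub i + b) ∧
          c = ∑ i, w i * (x i - Lb i) * v i} μ ∧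
      IsLeast {c : ℝ | ∃ (I : Finset (Fin n)) (h : Fin n), h ∉ I ∧
          0 ≤ ell I ∧ ell (insert h I) < 0 ∧
          c = ∑ i ∈ I, w i * (x i - Lb i) +
            ell I / (Ub h - Lb h) * (x h - Lb h)} μ := by
  classical
  set a : Fin n → ℝ := fun i => w i * (Ub i - Lb i) with ha_def
  set c : Fin n → ℝ := fun i => w i * (x i - Lb i) with hc_def
  set T : ℝ := ∑ i, w i * Ub i + b with hT_def
  have ha : ∀ i, 0 < a i := by
    intro i
    by_cases h : 0 ≤ w i
    · have hwpos : 0 < w i := lt_of_le_of_ne h (Ne.symm (hw i))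
      have : Ub i - Lb i = U i - L i := by rw [hLb, hUb]; simp [h]
      simp only [ha_def, this]
      have := hLU i
      nlinarith
    · push_neg at h
      have : Ub i - Lb i = L i - U i := by rw [hLb, hUb]; simp [not_le.mpr h]
      simp only [ha_def, this]
      have := hLU i
      nlinarith
  have hc0 : ∀ i, 0 ≤ c i := by
    intro i
    by_cases h : 0 ≤ w i
    · have hLbi : Lb i = L i := by rw [hLb]; simp [h]
      simp only [hc_def, hLbi]
      have := (hx i).1
      nlinarith
    · push_neg at h
      have hLbi : Lb i = U i := by rw [hLb]; simp [not_le.mpr h]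
      simp only [hc_def, hLbi]
      have := (hx i).2
      nlinarith
  have hUbLb : ∀ i, Ub i - Lb i ≠ 0 := by
    intro i hz
    have := ha i
    simp only [ha_def] at this
    rw [hz, mul_zero] at this
    exact lt_irrefl _ this
  have hellT : ∀ I : Finset (Fin n), ell I = T - ∑ i ∈ I, a i := by
    intro I
    have h1 : ∑ i ∈ I, w i * Ub i + ∑ i ∈ Iᶜ, w i * Ub i = ∑ i, w i * Ub i :=
      Finset.sum_add_sum_compl I _
    have h2 : ∑ i ∈ I, a i = ∑ i ∈ I, w i * Ub i - ∑ i ∈ I, w i * Lb i := by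
      rw [← Finset.sum_sub_distrib]
      exact Finset.sum_congr rfl fun i _ => by simp only [ha_def]; ring
    rw [hell I]
    simp only [hT_def]
    linarith
  have hT0 : 0 ≤ T := by
    have := hellT ∅
    simp at this
    linarith
  have hTS : T < ∑ i, a i := by
    have := hellT Finset.univ
    linarith
  set r : Fin n → ℝ := fun i => c i / a i with hr_def
  have hcr : ∀ i, c i = r i * a i := by
    intro i
    show c i = c i / a i * a i
    rw [div_mul_cancel₀ _ (ne_of_gt (ha i))]
  -- every admissible pair (I,h) gives a feasible LP point with the same value
  have memLP : ∀ (I : Finset (Fin n)) (h : Fin n), h ∉ I → 0 ≤ ell I →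
      ell (insert h I) < 0 →
      ∃ v : Fin n → ℝ, (∀ i, 0 ≤ v i ∧ v i ≤ 1) ∧ (∑ i, a i * v i = T) ∧
        ∑ i ∈ I, c i + ell I / (Ub h - Lb h) * (x h - Lb h) = ∑ i, c i * v i := by
    intro I h hhI h0 hins
    have hsum_ins : ∑ i ∈ insert h I, a i = a h + ∑ i ∈ I, a i :=
      Finset.sum_insert hhI
    have hellI : ell I = T - ∑ i ∈ I, a i := hellT I
    have hellins : ell (insert h I) = T - (a h + ∑ i ∈ I, a i) := by
      rw [hellT, hsum_ins]
    have hlt : ell I < a h := by linarith [hins, hellins, hellI]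
    set v : Fin n → ℝ := fun i => if i ∈ I then 1 else if i = h then ell I / a h else 0
      with hv_def
    refine ⟨v, ?_, ?_, ?_⟩
    · intro i
      by_cases hi : i ∈ I
      · simp [hv_def, hi]
      · by_cases hih : i = h
        · have hvi : v i = ell I / a h := by subst hih; simp [hv_def, hhI]
          rw [hvi]
          constructor
          · exact div_nonneg h0 (le_of_lt (ha h))
          · rw [div_le_one (ha h)]; linarith
        · simp [hv_def, hi, hih]
    · have hzero : ∀ i ∈ Finset.univ, i ∉ insert h I → a i * v i = 0 := by
        intro i _ hi
        simp only [Finset.mem_insert, not_or] at hi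
        simp [hv_def, hi.1, hi.2]
      rw [← Finset.sum_subset (Finset.subset_univ (insert h I)) hzero]
      rw [Finset.sum_insert hhI]
      have hvh : v h = ell I / a h := by simp [hv_def, hhI]
      have hvI : ∀ i ∈ I, a i * v i = a i := by
        intro i hi; simp [hv_def, hi]
      rw [Finset.sum_congr rfl hvI, hvh]
      rw [mul_div_cancel₀ _ (ne_of_gt (ha h))]
      linarith [hellI]
    · have hzero : ∀ i ∈ Finset.univ, i ∉ insert h I → c i * v i = 0 := by
        intro i _ hi
        simp only [Finset.mem_insert, not_or] at hi
        simp [hv_def, hi.1, hi.2]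
      rw [← Finset.sum_subset (Finset.subset_univ (insert h I)) hzero]
      rw [Finset.sum_insert hhI]
      have hvh : v h = ell I / a h := by simp [hv_def, hhI]
      have hvI : ∀ i ∈ I, c i * v i = c i := by
        intro i hi; simp [hv_def, hi]
      rw [Finset.sum_congr rfl hvI, hvh]
      have : ell I / (Ub h - Lb h) * (x h - Lb h) = c h * (ell I / a h) := by
        simp only [hc_def, ha_def]
        field_simp [hw h, hUbLb h]
      rw [this]
      ring
  -- n positive
  have hn : 0 < n := by
    rcases Nat.eq_zero_or_pos n with h0 | h0
    · exfalso
      subst h0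
      have : (Finset.univ : Finset (Fin 0)) = ∅ := rfl
      rw [this] at huniv
      linarith
    · exact h0
  -- greedy construction via sorting by ratio
  set σ : Equiv.Perm (Fin n) := Tuple.sort r with hσ_def
  have hmono : Monotone (r ∘ σ) := Tuple.monotone_sort r
  set A : ℕ → ℝ := fun k => ∑ j ∈ Finset.univ.filter (fun j : Fin n => (j : ℕ) < k), a (σ j)
    with hA_def
  have hAn : A n = ∑ i, a i := by
    simp only [hA_def]
    rw [Finset.filter_true_of_mem (fun j _ => j.isLt)]
    exact Equiv.sum_comp σ a
  have hn1 : n - 1 + 1 = n := by omega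
  have hex : ∃ k, T < A (k + 1) := by
    refine ⟨n - 1, ?_⟩
    rw [hn1, hAn]
    exact hTS
  set k : ℕ := Nat.find hex with hk_def
  have hk1 : T < A (k + 1) := Nat.find_spec hex
  have hkn : k < n := by
    have : k ≤ n - 1 := Nat.find_le (by rw [hn1, hAn]; exact hTS)
    omega
  have hk0 : A k ≤ T := by
    rcases Nat.eq_zero_or_pos k with h0 | h0
    · rw [h0]
      have : A 0 = 0 := by
        simp [hA_def]
      rw [this]; exact hT0
    · have := Nat.find_min hex (show k - 1 < k by omega)
      push_neg at this
      have hk1eq : k - 1 + 1 = k := by omega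
      rwa [hk1eq] at this
  set kF : Fin n := ⟨k, hkn⟩ with hkF_def
  set hh : Fin n := σ kF with hh_def
  set Istar : Finset (Fin n) := (Finset.univ.filter fun j : Fin n => (j : ℕ) < k).image σ
    with hI_def
  have hIA : ∑ i ∈ Istar, a i = A k := by
    rw [hI_def, Finset.sum_image (fun i _ j _ hij => σ.injective hij)]
  have hfilter_succ : (Finset.univ.filter fun j : Fin n => (j : ℕ) < k + 1)
      = insert kF (Finset.univ.filter fun j : Fin n => (j : ℕ) < k) := by
    ext j
    simp only [Finset.mem_filter, Finset.mem_univ, true_and, Finset.mem_insert, Fin.ext_iff,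
      hkF_def]
    omega
  have hstep : A (k + 1) = a (σ kF) + A k := by
    simp only [hA_def]
    rw [hfilter_succ, Finset.sum_insert (by simp; exact le_rfl)]
  have hhI : hh ∉ Istar := by
    intro hmem
    rw [hI_def] at hmem
    obtain ⟨j, hj, hje⟩ := Finset.mem_image.mp hmem
    have : j = kF := σ.injective hje
    rw [this] at hj
    simp [hkF_def] at hj
  have hell0 : 0 ≤ ell Istar := by
    rw [hellT, hIA]; linarith
  have hellins : ell (insert hh Istar) < 0 := by
    rw [hellT, Finset.sum_insert hhI, hIA, hh_def]
    linarith [hstep]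
  -- ratio bounds
  have hrI : ∀ i ∈ Istar, r i ≤ r hh := by
    intro i hi
    rw [hI_def] at hi
    obtain ⟨j, hj, rfl⟩ := Finset.mem_image.mp hi
    simp only [Finset.mem_filter] at hj
    have : j ≤ kF := by
      rw [Fin.le_def]; exact le_of_lt hj.2
    exact hmono this
  have hrO : ∀ i, i ∉ Istar → r hh ≤ r i := by
    intro i hi
    have hieq : σ (σ.symm i) = i := σ.apply_symm_apply i
    have hjk : kF ≤ σ.symm i := by
      by_contra hcon
      push_neg at hcon
      apply hi
      rw [hI_def]
      exact Finset.mem_image.mpr ⟨σ.symm i, Finset.mem_filter.mpr ⟨Finset.mem_univ _, hcon⟩, hieq⟩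
    have := hmono hjk
    simpa [hieq] using this
  -- the greedy value
  set g : ℝ := ∑ i ∈ Istar, c i + ell Istar / (Ub hh - Lb hh) * (x hh - Lb hh) with hg_def
  have hrhh : r hh = (x hh - Lb hh) / (Ub hh - Lb hh) := by
    show c hh / a hh = _
    simp only [hc_def, ha_def]
    rw [mul_div_mul_left _ _ (hw hh)]
  have hg2 : g = ∑ i ∈ Istar, c i + ell Istar * r hh := by
    rw [hg_def, hrhh]
    congr 1
    rw [div_mul_eq_mul_div, mul_div_assoc]
  set θ : ℝ := r hh with hθ_def
  -- lower bound: every feasible point has value at least g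
  have lb : ∀ v : Fin n → ℝ, (∀ i, 0 ≤ v i ∧ v i ≤ 1) → (∑ i, a i * v i = T) →
      g ≤ ∑ i, c i * v i := by
    intro v hv hcon
    have key : ∑ i, c i * v i - g
        = ∑ i ∈ Istar, (r i - θ) * a i * (v i - 1) + ∑ i ∈ Istarᶜ, (r i - θ) * a i * v i := by
      have e1 : ∑ i ∈ Istar, (r i - θ) * a i * (v i - 1)
          = ∑ i ∈ Istar, ((r i - θ) * a i * v i + (θ * a i - c i)) := by
        refine Finset.sum_congr rfl fun i _ => ?_
        rw [hcr i]; ring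
      rw [e1, Finset.sum_add_distrib]
      have e2 : ∑ i ∈ Istar, (r i - θ) * a i * v i + ∑ i ∈ Istar, (θ * a i - c i)
          + ∑ i ∈ Istarᶜ, (r i - θ) * a i * v i
          = (∑ i, (r i - θ) * a i * v i) + ∑ i ∈ Istar, (θ * a i - c i) := by
        rw [← Finset.sum_add_sum_compl Istar (fun i => (r i - θ) * a i * v i)]
        ring
      rw [e2]
      have e3 : ∑ i, (r i - θ) * a i * v i = ∑ i, c i * v i - θ * T := by
        have : ∀ i, (r i - θ) * a i * v i = c i * v i - θ * (a i * v i) := by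
          intro i; rw [hcr i]; ring
        rw [Finset.sum_congr rfl (fun i _ => this i), Finset.sum_sub_distrib,
          ← Finset.mul_sum, hcon]
      have e4 : ∑ i ∈ Istar, (θ * a i - c i) = θ * A k - ∑ i ∈ Istar, c i := by
        rw [Finset.sum_sub_distrib, ← Finset.mul_sum, hIA]
      rw [e3, e4, hg2, hellT, hIA]
      ring
    have pos1 : 0 ≤ ∑ i ∈ Istar, (r i - θ) * a i * (v i - 1) := by
      refine Finset.sum_nonneg fun i hi => ?_
      have h1 : (r i - θ) * a i ≤ 0 :=
        mul_nonpos_of_nonpos_of_nonneg (by linarith [hrI i hi]) (le_of_lt (ha i))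
      have h2 : v i - 1 ≤ 0 := by linarith [(hv i).2]
      nlinarith [h1, h2]
    have pos2 : 0 ≤ ∑ i ∈ Istarᶜ, (r i - θ) * a i * v i := by
      refine Finset.sum_nonneg fun i hi => ?_
      have hiI : i ∉ Istar := Finset.mem_compl.mp hi
      have h1 : 0 ≤ (r i - θ) * a i :=
        mul_nonneg (by linarith [hrO i hiI]) (le_of_lt (ha i))
      exact mul_nonneg h1 (hv i).1
    linarith
  obtain ⟨v0, hv0, hcon0, heq0⟩ := memLP Istar hh hhI hell0 hellins
  refine ⟨⟨v0, hv0, hcon0⟩, g, ⟨⟨v0, hv0, hcon0, heq0⟩, ?_⟩, ⟨Istar, hh, hhI, hell0, hellins, rfl⟩, ?_⟩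
  · rintro y ⟨v, hv, hconv, rfl⟩
    exact lb v hv hconv
  · rintro y ⟨I, h, hhI', h0, hins, rfl⟩
    obtain ⟨v, hv, hconv, heq⟩ := memLP I h hhI' h0 hins
    rw [heq]
    exact lb v hv hconv
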